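/- Quantitative tail estimate: let n ≥ 3, 1 ≤ m ≤ (n-1)/2 an integer, and let g : ℝⁿ → [0,∞) be measurable with 0 < C₀ := ∫_{ℝⁿ} g(z)/|z|^{n-2} dz < ∞. Then for all sufficiently large |y| (say |y| ≥ R₀ for some R₀ ≥ 3), ∫_{ℝⁿ} g(z)/|y-z|^{n-2m} dz ≥ C₀ / (2^{n-2m+1} |y|^{n-2m} ln|y|). -/

import Mathlib

open MeasureTheory Real

theorem stmt_17 (n m : ℕ) (hn : 3 ≤ n) (hm1 : 1 ≤ m) (hm2 : 2 * m + 1 ≤ n)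
    (g : EuclideanSpace ℝ (Fin n) → ℝ) (hmeas : Measurable g) (hnonneg : ∀ z, 0 ≤ g z)
    (hint : Integrable (fun z : EuclideanSpace ℝ (Fin n) => g z / ‖z‖ ^ ((n : ℝ) - 2)))
    (hpos : 0 < ∫ z : EuclideanSpace ℝ (Fin n), g z / ‖z‖ ^ ((n : ℝ) - 2)) :
    ∃ R₀ : ℝ, 3 ≤ R₀ ∧ ∀ y : EuclideanSpace ℝ (Fin n), R₀ ≤ ‖y‖ →
      ENNReal.ofReal ((∫ z : EuclideanSpace ℝ (Fin n), g z / ‖z‖ ^ ((n : ℝ) - 2)) /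
          (2 ^ ((n : ℝ) - 2 * m + 1) * ‖y‖ ^ ((n : ℝ) - 2 * m) * Real.log ‖y‖)) ≤
        ∫⁻ z : EuclideanSpace ℝ (Fin n),
          ENNReal.ofReal (g z / ‖y - z‖ ^ ((n : ℝ) - 2 * m)) := by
  classical
  haveI : Nonempty (Fin n) := ⟨⟨0, by omega⟩⟩
  haveI : Nontrivial (EuclideanSpace ℝ (Fin n)) := inferInstance
  have hhnn : ∀ z : EuclideanSpace ℝ (Fin n), 0 ≤ g z / ‖z‖ ^ ((n : ℝ) - 2) := fun z =>
    div_nonneg (hnonneg z) (Real.rpow_nonneg (norm_nonneg z) _)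
  set C₀ : ℝ := ∫ z : EuclideanSpace ℝ (Fin n), g z / ‖z‖ ^ ((n : ℝ) - 2) with hC
  have hn2 : (1:ℝ) ≤ (n:ℝ) - 2 := by
    have : (3:ℝ) ≤ (n:ℝ) := by exact_mod_cast hn
    linarith
  have hn2pos : (0:ℝ) < (n:ℝ) - 2 := lt_of_lt_of_le one_pos hn2
  have hp1 : (1:ℝ) ≤ (n:ℝ) - 2 * m := by
    have : (2*m+1 : ℝ) ≤ (n:ℝ) := by exact_mod_cast hm2
    push_cast at this ⊢; linarith
  have hppos : (0:ℝ) < (n:ℝ) - 2 * m := lt_of_lt_of_le one_pos hp1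
  have hq : (0:ℝ) ≤ ((n:ℝ) - 2) - ((n:ℝ) - 2*m) := by
    have : (1:ℝ) ≤ (m:ℝ) := by exact_mod_cast hm1
    linarith
  -- Step 1: find ε > 0 with C₀/2 ≤ ∫_{ε ≤ ‖z‖}
  obtain ⟨ε, hε, hεint⟩ : ∃ ε : ℝ, 0 < ε ∧
      C₀/2 ≤ ∫ z in {z : EuclideanSpace ℝ (Fin n) | ε ≤ ‖z‖}, g z / ‖z‖ ^ ((n : ℝ) - 2) := by
    set s : ℕ → Set (EuclideanSpace ℝ (Fin n)) :=
      fun k => {z : EuclideanSpace ℝ (Fin n) | 1/((k:ℝ)+1) ≤ ‖z‖} with hs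
    have hsm : ∀ k, MeasurableSet (s k) := fun k =>
      measurableSet_le measurable_const measurable_norm
    have hmono : Monotone s := by
      intro a b hab z hz
      simp only [hs, Set.mem_setOf_eq] at hz ⊢
      have hab' : (a:ℝ) + 1 ≤ (b:ℝ) + 1 := by
        have : (a:ℝ) ≤ (b:ℝ) := Nat.cast_le.mpr hab
        linarith
      exact le_trans (one_div_le_one_div_of_le (by positivity) hab') hz
    have htend := tendsto_setIntegral_of_monotone hsm hmono (hint.integrableOn)
    have hU : (⋃ k, s k) =ᶠ[ae (volume : Measure (EuclideanSpace ℝ (Fin n)))] Set.univ := by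
      rw [Filter.eventuallyEq_set]
      have h0 : (volume : Measure (EuclideanSpace ℝ (Fin n))) {(0:EuclideanSpace ℝ (Fin n))} = 0 :=
        measure_singleton 0
      filter_upwards [measure_eq_zero_iff_ae_notMem.mp h0] with z hz
      simp only [Set.mem_iUnion, Set.mem_univ, iff_true]
      have hz0 : z ≠ 0 := by simpa using hz
      have hzn : 0 < ‖z‖ := norm_pos_iff.mpr hz0
      obtain ⟨k, hk⟩ := exists_nat_gt (1/‖z‖)
      refine ⟨k, ?_⟩
      show 1/((k:ℝ)+1) ≤ ‖z‖
      rw [div_le_iff₀ (by positivity)]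
      rw [div_lt_iff₀ hzn] at hk
      nlinarith
    have hUeq : (∫ x in ⋃ k, s k, g x / ‖x‖ ^ ((n : ℝ) - 2)) = C₀ := by
      rw [setIntegral_congr_set hU, setIntegral_univ]
    rw [hUeq] at htend
    obtain ⟨k, hk⟩ := (htend.eventually (eventually_ge_nhds (show C₀/2 < C₀ by linarith [hpos]))).exists
    exact ⟨1/((k:ℝ)+1), by positivity, hk⟩
  refine ⟨max 3 (Real.exp (ε⁻¹ ^ ((n:ℝ)-2))), le_max_left _ _, fun y hy => ?_⟩
  have hy3 : (3:ℝ) ≤ ‖y‖ := le_trans (le_max_left _ _) hy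
  have hyexp : Real.exp (ε⁻¹ ^ ((n:ℝ)-2)) ≤ ‖y‖ := le_trans (le_max_right _ _) hy
  set L : ℝ := Real.log ‖y‖ with hLdef
  have hL1 : 1 ≤ L := by
    have h3 : Real.exp 1 ≤ 3 := by
      have := Real.exp_one_lt_d9
      linarith
    calc 1 = Real.log (Real.exp 1) := (Real.log_exp 1).symm
    _ ≤ L := Real.log_le_log (Real.exp_pos 1) (le_trans h3 hy3)
  have hLpos : 0 < L := lt_of_lt_of_le one_pos hL1
  have hLge : ε⁻¹ ^ ((n:ℝ)-2) ≤ L := by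
    calc ε⁻¹ ^ ((n:ℝ)-2) = Real.log (Real.exp (ε⁻¹ ^ ((n:ℝ)-2))) := (Real.log_exp _).symm
    _ ≤ L := Real.log_le_log (Real.exp_pos _) hyexp
  set K : ℝ := L ^ (1/((n:ℝ)-2)) with hKdef
  have hKpos : 0 < K := Real.rpow_pos_of_pos hLpos _
  have hK1 : 1 ≤ K := Real.one_le_rpow hL1 (by positivity)
  have hKinv : ε⁻¹ ≤ K := by
    have : ε⁻¹ = (ε⁻¹ ^ ((n:ℝ)-2)) ^ (1/((n:ℝ)-2)) := by
      rw [← Real.rpow_mul (le_of_lt (inv_pos.mpr hε)), mul_one_div, div_self hn2pos.ne',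
        Real.rpow_one]
    rw [this]
    exact Real.rpow_le_rpow (by positivity) hLge (by positivity)
  set t : ℝ := K⁻¹ with htdef
  have htpos : 0 < t := inv_pos.mpr hKpos
  have htε : t ≤ ε := by
    rw [htdef, ← inv_inv ε]
    exact inv_anti₀ (inv_pos.mpr hε) hKinv
  set A : Set (EuclideanSpace ℝ (Fin n)) := {z : EuclideanSpace ℝ (Fin n) | t ≤ ‖z‖} with hA
  have hAmeas : MeasurableSet A := measurableSet_le measurable_const measurable_norm
  have hIA : C₀/2 ≤ ∫ z in A, g z / ‖z‖ ^ ((n : ℝ) - 2) := by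
    refine le_trans hεint (setIntegral_mono_set hint.integrableOn
      (Filter.Eventually.of_forall fun z => hhnn z) (Filter.Eventually.of_forall ?_))
    intro z hz
    exact le_trans htε hz
  set p : ℝ := (n:ℝ) - 2*m with hpdef
  set D : ℝ := 2 ^ p * ‖y‖ ^ p * L with hDdef
  have hyp : (0:ℝ) < ‖y‖ := by linarith
  have hDpos : 0 < D := by
    have h1 : (0:ℝ) < 2 ^ p := Real.rpow_pos_of_pos two_pos _
    have h2 : (0:ℝ) < ‖y‖ ^ p := Real.rpow_pos_of_pos hyp _
    positivity
  -- pointwise bound on A off {y}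
  have hpt : ∀ z ∈ A, z ≠ y →
      (g z / ‖z‖ ^ ((n : ℝ) - 2)) * D⁻¹ ≤ g z / ‖y - z‖ ^ p := by
    intro z hz hzy
    have hzt : t ≤ ‖z‖ := hz
    have hz0 : 0 < ‖z‖ := lt_of_lt_of_le htpos hzt
    have hyz0 : 0 < ‖y - z‖ := by
      rw [norm_pos_iff, sub_ne_zero]; exact fun e => hzy e.symm
    have hKz : 1 ≤ K * ‖z‖ := by
      calc (1:ℝ) = K * t := by rw [htdef]; field_simp
      _ ≤ K * ‖z‖ := by gcongr
    have hnorm : ‖y - z‖ ≤ 2 * (‖y‖ * (K * ‖z‖)) := by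
      have h1 : ‖y - z‖ ≤ ‖y‖ + ‖z‖ := norm_sub_le y z
      have h2 : ‖y‖ ≤ ‖y‖ * (K * ‖z‖) := le_mul_of_one_le_right (le_of_lt hyp) hKz
      have h3 : ‖z‖ ≤ ‖y‖ * (K * ‖z‖) := by
        calc ‖z‖ = 1 * 1 * ‖z‖ := by ring
        _ ≤ ‖y‖ * K * ‖z‖ := by gcongr <;> linarith
        _ = ‖y‖ * (K * ‖z‖) := by ring
      linarith
    have hkey : ‖y - z‖ ^ p ≤ ‖z‖ ^ ((n:ℝ)-2) * D := by
      have step1 : ‖y - z‖ ^ p ≤ (2 * (‖y‖ * (K * ‖z‖))) ^ p :=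
        Real.rpow_le_rpow (norm_nonneg _) hnorm (le_of_lt hppos)
      have step2 : (2 * (‖y‖ * (K * ‖z‖))) ^ p = 2^p * (‖y‖^p * (K^p * ‖z‖^p)) := by
        rw [Real.mul_rpow (by norm_num) (by positivity),
            Real.mul_rpow (by positivity) (by positivity),
            Real.mul_rpow (by positivity) (by positivity)]
      have step3 : K^p * ‖z‖^p ≤ L * ‖z‖ ^ ((n:ℝ)-2) := by
        set q : ℝ := ((n:ℝ)-2) - p with hqdef
        have hzq : ‖z‖ ^ p = ‖z‖ ^ ((n:ℝ)-2) * (‖z‖ ^ q)⁻¹ := by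
          rw [← Real.rpow_neg (le_of_lt hz0), ← Real.rpow_add hz0]
          congr 1; rw [hqdef]; ring
        have hqinv : (‖z‖ ^ q)⁻¹ ≤ K ^ q := by
          have htq : t ^ q ≤ ‖z‖ ^ q := Real.rpow_le_rpow (le_of_lt htpos) hzt hq
          have htq' : t ^ q = (K ^ q)⁻¹ := by
            rw [htdef, ← Real.inv_rpow (le_of_lt hKpos)]
          calc (‖z‖ ^ q)⁻¹ ≤ (t ^ q)⁻¹ := by
                have := Real.rpow_pos_of_pos htpos q
                gcongr
          _ = K ^ q := by rw [htq', inv_inv]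
        have hKpq : K ^ p * K ^ q = L := by
          rw [← Real.rpow_add hKpos, hKdef, ← Real.rpow_mul (le_of_lt hLpos)]
          have hexp : 1/((n:ℝ)-2) * (p + q) = 1 := by
            rw [hqdef]; field_simp; ring
          rw [hexp, Real.rpow_one]
        calc K^p * ‖z‖^p = K^p * (‖z‖ ^ ((n:ℝ)-2) * (‖z‖ ^ q)⁻¹) := by rw [hzq]
        _ ≤ K^p * (‖z‖ ^ ((n:ℝ)-2) * K ^ q) := by
              have hKp : 0 < K ^ p := Real.rpow_pos_of_pos hKpos p
              have := mul_le_mul_of_nonneg_left (mul_le_mul_of_nonneg_left hqinv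
                (Real.rpow_nonneg (norm_nonneg z) ((n:ℝ)-2))) (le_of_lt hKp)
              linarith
        _ = (K^p * K^q) * ‖z‖ ^ ((n:ℝ)-2) := by ring
        _ = L * ‖z‖ ^ ((n:ℝ)-2) := by rw [hKpq]
      calc ‖y - z‖ ^ p ≤ 2^p * (‖y‖^p * (K^p * ‖z‖^p)) := step1.trans (le_of_eq step2)
      _ ≤ 2^p * (‖y‖^p * (L * ‖z‖ ^ ((n:ℝ)-2))) := by
            have h2p : (0:ℝ) < 2^p := Real.rpow_pos_of_pos two_pos p
            have hyp' : (0:ℝ) < ‖y‖^p := Real.rpow_pos_of_pos hyp p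
            gcongr
      _ = ‖z‖ ^ ((n:ℝ)-2) * D := by rw [hDdef]; ring
    have heq : (g z / ‖z‖ ^ ((n : ℝ) - 2)) * D⁻¹ = g z / (‖z‖ ^ ((n:ℝ)-2) * D) := by
      field_simp
    rw [heq]
    gcongr
    all_goals first
      | exact hnonneg z
      | exact hkey
      | exact Real.rpow_pos_of_pos hyz0 p

  -- main chain
  have goal_eq : C₀ / (2 ^ ((n : ℝ) - 2 * m + 1) * ‖y‖ ^ ((n : ℝ) - 2 * m) * Real.log ‖y‖)
      = (C₀/2) / D := by
    rw [Real.rpow_add two_pos, Real.rpow_one, div_div, hDdef, hpdef, hLdef]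
    ring
  rw [goal_eq]
  calc ENNReal.ofReal ((C₀/2) / D)
      ≤ ENNReal.ofReal ((∫ z in A, g z / ‖z‖ ^ ((n : ℝ) - 2)) / D) := by
        apply ENNReal.ofReal_le_ofReal
        gcongr
    _ = ENNReal.ofReal (∫ z in A, g z / ‖z‖ ^ ((n : ℝ) - 2)) * ENNReal.ofReal D⁻¹ := by
        rw [div_eq_mul_inv, ENNReal.ofReal_mul]
        exact setIntegral_nonneg hAmeas fun z _ => hhnn z
    _ ≤ (∫⁻ z in A, ENNReal.ofReal (g z / ‖z‖ ^ ((n : ℝ) - 2))) * ENNReal.ofReal D⁻¹ := by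
        gcongr
        rw [ofReal_integral_eq_lintegral_ofReal hint.integrableOn
          (Filter.Eventually.of_forall fun z => hhnn z)]
    _ = ∫⁻ z in A, ENNReal.ofReal (g z / ‖z‖ ^ ((n : ℝ) - 2)) * ENNReal.ofReal D⁻¹ := by
        rw [lintegral_mul_const' _ _ ENNReal.ofReal_ne_top]
    _ = ∫⁻ z in A, ENNReal.ofReal ((g z / ‖z‖ ^ ((n : ℝ) - 2)) * D⁻¹) := by
        refine lintegral_congr fun z => ?_
        rw [ENNReal.ofReal_mul (hhnn z)]
    _ ≤ ∫⁻ z in A, ENNReal.ofReal (g z / ‖y - z‖ ^ p) := by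
        apply lintegral_mono_ae
        have hy0 : (volume : Measure (EuclideanSpace ℝ (Fin n))).restrict A {y} = 0 :=
          le_antisymm (le_trans (Measure.restrict_le_self _)
            (le_of_eq (measure_singleton y))) (zero_le)
        filter_upwards [ae_restrict_mem hAmeas, measure_eq_zero_iff_ae_notMem.mp hy0] with z hzA hzy
        exact ENNReal.ofReal_le_ofReal (hpt z hzA (by simpa using hzy))
    _ ≤ ∫⁻ z : EuclideanSpace ℝ (Fin n), ENNReal.ofReal (g z / ‖y - z‖ ^ p) :=
        setLIntegral_le_lintegral _ _
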